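/- In the two-patch edge setting, there exists a linear operator P⁰ : V_pw → V_pw such that: (1) P⁰φ is edge-continuous for every φ ∈ V_pw; (2) P⁰φ = φ if and only if φ is edge-continuous (hence P⁰ is idempotent and its range is exactly the conforming subspace V_h of edge-continuous pairs); and (3) P⁰ preserves patchwise polynomial moments of order r, i.e. for each σ ∈ {−,+} and all q₁, q₂ ∈ Q one has ∫_{[0,1]²} (P⁰φ)^σ(x,s) q₁(x) q₂(s) dx ds = ∫_{[0,1]²} φ^σ(x,s) q₁(x) q₂(s) dx ds for every φ ∈ V_pw. -/

import Mathlib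

noncomputable section

/-- The `L²(0,1)` pairing `⟨f, g⟩ = ∫₀¹ f g`. -/
def l2ip (f g : ℝ → ℝ) : ℝ := ∫ x in (0:ℝ)..1, f x * g x

/-- Real polynomial functions of degree at most `r - 1`. -/
def polyDegLT (r : ℕ) : Set (ℝ → ℝ) :=
  {f | ∃ p : Polynomial ℝ, p.degree < (r : WithBot ℕ) ∧ f = fun x => p.eval x}

/-- Tensor-product span of the functions `(x, s) ↦ λᵢ(x) λⱼ(s)`. -/
def tensorSpan {n : ℕ} (lam : Fin (n + 1) → ℝ → ℝ) : Submodule ℝ (ℝ → ℝ → ℝ) :=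
  Submodule.span ℝ {f | ∃ i j, f = fun x s => lam i x * lam j s}

/-- Edge continuity: the two patch components agree on the shared edge `s = 0`. -/
def EdgeCont (φ : (ℝ → ℝ → ℝ) × (ℝ → ℝ → ℝ)) : Prop :=
  ∀ x ∈ Set.Icc (0:ℝ) 1, φ.1 x 0 = φ.2 x 0

/-- The moment `∫_{[0,1]²} f(x,s) q₁(x) q₂(s) dx ds`. -/
def mom2 (f : ℝ → ℝ → ℝ) (q₁ q₂ : ℝ → ℝ) : ℝ :=
  ∫ x in (0:ℝ)..1, ∫ s in (0:ℝ)..1, f x s * q₁ x * q₂ s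

/-- Theorem 3.3 of the paper, two-patch edge setting: there exists a
moment-preserving `H¹`-conforming projection `P⁰` on the broken space `V_pw`: it maps into
the edge-continuous functions, fixes exactly the edge-continuous functions (hence is
idempotent with range the conforming subspace), and preserves the patchwise polynomial
moments of order `r`. -/
lemma aux_tensor_mem {n : ℕ} (lam : Fin (n + 1) → ℝ → ℝ) {v w : ℝ → ℝ}
    (hv : v ∈ Submodule.span ℝ (Set.range lam))
    (hw : w ∈ Submodule.span ℝ (Set.range lam)) :
    (fun x s => v x * w s) ∈ tensorSpan lam := by
  induction hv using Submodule.span_induction with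
  | mem v hv =>
    obtain ⟨i, rfl⟩ := hv
    induction hw using Submodule.span_induction with
    | mem w hw =>
      obtain ⟨j, rfl⟩ := hw
      exact Submodule.subset_span ⟨i, j, rfl⟩
    | zero =>
      have : (fun x s => lam i x * (0:ℝ→ℝ) s) = (0:ℝ→ℝ→ℝ) := by funext x s; simp
      rw [this]; exact zero_mem _
    | add w₁ w₂ _ _ h1 h2 =>
      have : (fun x s => lam i x * (w₁ + w₂) s)
          = (fun x s => lam i x * w₁ s) + (fun x s => lam i x * w₂ s) := by
        funext x s; simp [mul_add]
      rw [this]; exact add_mem h1 h2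
    | smul a w _ h =>
      have : (fun x s => lam i x * (a • w) s) = a • (fun x s => lam i x * w s) := by
        funext x s; simp; ring
      rw [this]; exact Submodule.smul_mem _ a h
  | zero =>
    have : (fun x s => (0:ℝ→ℝ) x * w s) = (0:ℝ→ℝ→ℝ) := by funext x s; simp
    rw [this]; exact zero_mem _
  | add v₁ v₂ _ _ h1 h2 =>
    have : (fun x s => (v₁ + v₂) x * w s)
        = (fun x s => v₁ x * w s) + (fun x s => v₂ x * w s) := by
      funext x s; simp [add_mul]
    rw [this]; exact add_mem h1 h2
  | smul a v _ h =>
    have : (fun x s => (a • v) x * w s) = a • (fun x s => v x * w s) := by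
      funext x s; simp [mul_assoc]
    rw [this]; exact Submodule.smul_mem _ a h

lemma aux_trace_mem {n : ℕ} (lam : Fin (n + 1) → ℝ → ℝ) {f : ℝ → ℝ → ℝ}
    (hf : f ∈ tensorSpan lam) :
    (fun x => f x 0) ∈ Submodule.span ℝ (Set.range lam) := by
  induction hf using Submodule.span_induction with
  | mem f hf =>
    obtain ⟨i, j, rfl⟩ := hf
    have : (fun x => lam i x * lam j 0) = (lam j 0) • lam i := by
      funext x; simp [mul_comm]
    rw [this]; exact Submodule.smul_mem _ _ (Submodule.subset_span ⟨i, rfl⟩)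
  | zero => exact zero_mem (Submodule.span ℝ (Set.range lam))
  | add f g _ _ hfm hgm =>
    have : (fun x => (f + g) x 0) = (fun x => f x 0) + (fun x => g x 0) := rfl
    rw [this]; exact add_mem hfm hgm
  | smul a f _ hfm =>
    have : (fun x => (a • f) x 0) = a • (fun x => f x 0) := rfl
    rw [this]; exact Submodule.smul_mem _ a hfm

lemma aux_span_contOn {n : ℕ} {lam : Fin (n + 1) → ℝ → ℝ}
    (hc : ∀ i, ContinuousOn (lam i) (Set.Icc (0:ℝ) 1)) {v : ℝ → ℝ}
    (hv : v ∈ Submodule.span ℝ (Set.range lam)) :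
    ContinuousOn v (Set.Icc (0:ℝ) 1) := by
  induction hv using Submodule.span_induction with
  | mem v hv => obtain ⟨i, rfl⟩ := hv; exact hc i
  | zero => exact continuousOn_const
  | add v₁ v₂ _ _ h1 h2 => exact h1.add h2
  | smul a v _ h => exact h.const_smul a

lemma aux_tensor_contOn_s {n : ℕ} {lam : Fin (n + 1) → ℝ → ℝ}
    (hc : ∀ i, ContinuousOn (lam i) (Set.Icc (0:ℝ) 1)) {f : ℝ → ℝ → ℝ}
    (hf : f ∈ tensorSpan lam) (x : ℝ) :
    ContinuousOn (fun s => f x s) (Set.Icc (0:ℝ) 1) := by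
  induction hf using Submodule.span_induction with
  | mem f hf =>
    obtain ⟨i, j, rfl⟩ := hf
    exact continuousOn_const.mul (hc j)
  | zero => exact continuousOn_const
  | add f g _ _ h1 h2 => exact h1.add h2
  | smul a f _ h =>
    have : (fun s => (a • f) x s) = fun s => a * f x s := rfl
    rw [this]; exact continuousOn_const.mul h

lemma aux_poly_cont {r : ℕ} {q : ℝ → ℝ} (hq : q ∈ polyDegLT r) : Continuous q := by
  obtain ⟨p, _, rfl⟩ := hq; exact p.continuous

theorem stmt4
    -- the two univariate spline spaces 𝕍₋ ⊆ 𝕍₊ with interpolatory bases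
    (nm np : ℕ)
    (lamm : Fin (nm + 1) → ℝ → ℝ) (lamp : Fin (np + 1) → ℝ → ℝ)
    (hc_m : ∀ i, ContinuousOn (lamm i) (Set.Icc (0:ℝ) 1))
    (hc_p : ∀ i, ContinuousOn (lamp i) (Set.Icc (0:ℝ) 1))
    (hli_m : LinearIndependent ℝ lamm) (hli_p : LinearIndependent ℝ lamp)
    (h0_m : ∀ i, lamm i 0 = if i = 0 then 1 else 0)
    (h1_m : ∀ i, lamm i 1 = if i = Fin.last nm then 1 else 0)
    (h0_p : ∀ i, lamp i 0 = if i = 0 then 1 else 0)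
    (h1_p : ∀ i, lamp i 1 = if i = Fin.last np then 1 else 0)
    (hnested : Submodule.span ℝ (Set.range lamm) ≤ Submodule.span ℝ (Set.range lamp))
    -- the order r of moment preservation; Q ⊆ 𝕍₋
    (r : ℕ)
    (hQ : polyDegLT r ⊆ (Submodule.span ℝ (Set.range lamm) : Set (ℝ → ℝ)))
    -- (a) a moment-preserving restriction operator R : 𝕍₊ → 𝕍₋ preserving endpoint values
    (R : ↥(Submodule.span ℝ (Set.range lamp)) →ₗ[ℝ] ↥(Submodule.span ℝ (Set.range lamm)))
    (hRid : ∀ v : ↥(Submodule.span ℝ (Set.range lamp)),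
      (v : ℝ → ℝ) ∈ Submodule.span ℝ (Set.range lamm) → ((R v : ℝ → ℝ)) = (v : ℝ → ℝ))
    (hR0 : ∀ v, ((R v : ℝ → ℝ)) 0 = (v : ℝ → ℝ) 0)
    (hR1 : ∀ v, ((R v : ℝ → ℝ)) 1 = (v : ℝ → ℝ) 1)
    (hRmom : ∀ v, ∀ q ∈ polyDegLT r, l2ip (R v : ℝ → ℝ) q = l2ip (v : ℝ → ℝ) q)
    -- (b) interior splines μ^σ_e matching the moments of the endpoint basis functions
    (hmu_m : ∀ e : Fin (nm + 1), e = 0 ∨ e = Fin.last nm →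
      ∃ μ ∈ Submodule.span ℝ (Set.range lamm), μ 0 = 0 ∧ μ 1 = 0 ∧
        ∀ q ∈ polyDegLT r, l2ip μ q = l2ip (lamm e) q)
    (hmu_p : ∀ e : Fin (np + 1), e = 0 ∨ e = Fin.last np →
      ∃ μ ∈ Submodule.span ℝ (Set.range lamp), μ 0 = 0 ∧ μ 1 = 0 ∧
        ∀ q ∈ polyDegLT r, l2ip μ q = l2ip (lamp e) q) :
    -- conclusion: the conforming projection P⁰ on the broken space V_pw
    ∃ P : ↥((tensorSpan lamm).prod (tensorSpan lamp)) →ₗ[ℝ]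
          ↥((tensorSpan lamm).prod (tensorSpan lamp)),
      (∀ φ, EdgeCont ((P φ : (ℝ → ℝ → ℝ) × (ℝ → ℝ → ℝ)))) ∧
      (∀ φ, P φ = φ ↔ EdgeCont ((φ : (ℝ → ℝ → ℝ) × (ℝ → ℝ → ℝ)))) ∧
      (P ∘ₗ P = P) ∧
      (∀ φ, ∀ q₁ ∈ polyDegLT r, ∀ q₂ ∈ polyDegLT r,
        mom2 ((P φ : (ℝ → ℝ → ℝ) × (ℝ → ℝ → ℝ)).1) q₁ q₂ =
          mom2 ((φ : (ℝ → ℝ → ℝ) × (ℝ → ℝ → ℝ)).1) q₁ q₂ ∧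
        mom2 ((P φ : (ℝ → ℝ → ℝ) × (ℝ → ℝ → ℝ)).2) q₁ q₂ =
          mom2 ((φ : (ℝ → ℝ → ℝ) × (ℝ → ℝ → ℝ)).2) q₁ q₂) := by
  classical
  set Sm := Submodule.span ℝ (Set.range lamm) with hSmdef
  set Sp := Submodule.span ℝ (Set.range lamp) with hSpdef
  -- integrability helper
  have hII : ∀ f : ℝ → ℝ, ContinuousOn f (Set.Icc (0:ℝ) 1) →
      IntervalIntegrable f MeasureTheory.volume 0 1 := by
    intro f hf
    apply ContinuousOn.intervalIntegrable
    rwa [Set.uIcc_of_le (zero_le_one)]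
  -- the auxiliary function g with g 0 = 1 and zero Q-moments
  obtain ⟨μ, hμSp, hμ0, hμ1, hμmom⟩ := hmu_p 0 (Or.inl rfl)
  set g : ℝ → ℝ := lamp 0 - μ with hgdef
  have hgSp : g ∈ Sp := sub_mem (Submodule.subset_span ⟨0, rfl⟩) hμSp
  have hg0 : g 0 = 1 := by
    have := h0_p 0
    simp only [hgdef, Pi.sub_apply, this, hμ0, if_pos rfl]
    norm_num
  have hgcont : ContinuousOn g (Set.Icc (0:ℝ) 1) := aux_span_contOn hc_p hgSp
  have hgmom : ∀ q ∈ polyDegLT r, (∫ s in (0:ℝ)..1, g s * q s) = 0 := by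
    intro q hq
    have hqc := aux_poly_cont hq
    have h1 := hII (fun x => lamp 0 x * q x) ((hc_p 0).mul hqc.continuousOn)
    have h2 := hII (fun x => μ x * q x)
      ((aux_span_contOn hc_p hμSp).mul hqc.continuousOn)
    have e : (∫ s in (0:ℝ)..1, g s * q s)
        = (∫ x in (0:ℝ)..1, lamp 0 x * q x) - ∫ x in (0:ℝ)..1, μ x * q x := by
      rw [← intervalIntegral.integral_sub h1 h2]
      apply intervalIntegral.integral_congr
      intro x _
      simp [hgdef]; ring
    have := hμmom q hq
    unfold l2ip at this
    rw [e, this]; ring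
  -- the subspace K of elements of Sp vanishing on [0,1], and a projection onto it
  set K : Submodule ℝ ↥Sp :=
    { carrier := {v | ∀ x ∈ Set.Icc (0:ℝ) 1, (v : ℝ → ℝ) x = 0}
      add_mem' := by intro a b ha hb x hx; simp [ha x hx, hb x hx]
      zero_mem' := by intro x hx; simp
      smul_mem' := by intro c a ha x hx; simp [ha x hx] } with hKdef
  have hKmem : ∀ v : ↥Sp, v ∈ K ↔ ∀ x ∈ Set.Icc (0:ℝ) 1, (v : ℝ → ℝ) x = 0 := by
    intro v; rfl
  obtain ⟨K', hKc⟩ := Submodule.exists_isCompl K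
  set π : ↥Sp →ₗ[ℝ] ↥Sp := K.subtype ∘ₗ K.linearProjOfIsCompl K' hKc with hπdef
  have hπmem : ∀ v, π v ∈ K := fun v => (K.linearProjOfIsCompl K' hKc v).2
  have hπid : ∀ v, v ∈ K → π v = v := by
    intro v hv
    have h := Submodule.linearProjOfIsCompl_apply_left hKc ⟨v, hv⟩
    show K.subtype (K.projectionOnto K' hKc v) = v
    rw [show v = ((⟨v, hv⟩ : ↥K) : ↥Sp) from rfl, h]
    rfl
  -- the broken space and the jump operator
  set D := (tensorSpan lamm).prod (tensorSpan lamp) with hDdef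
  set tr : (ℝ → ℝ → ℝ) →ₗ[ℝ] (ℝ → ℝ) :=
    { toFun := fun f => fun x => f x 0
      map_add' := fun f g => rfl
      map_smul' := fun a f => rfl } with htrdef
  set J : ↥D →ₗ[ℝ] (ℝ → ℝ) :=
    tr ∘ₗ (LinearMap.snd ℝ _ _) ∘ₗ D.subtype - tr ∘ₗ (LinearMap.fst ℝ _ _) ∘ₗ D.subtype
    with hJdef
  have hJapp : ∀ φ : ↥D, ∀ x : ℝ,
      J φ x = (φ : (ℝ→ℝ→ℝ) × (ℝ→ℝ→ℝ)).2 x 0 - (φ : (ℝ→ℝ→ℝ) × (ℝ→ℝ→ℝ)).1 x 0 :=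
    fun φ x => rfl
  have hmemD : ∀ φ : ↥D, (φ : (ℝ→ℝ→ℝ) × (ℝ→ℝ→ℝ)).1 ∈ tensorSpan lamm ∧
      (φ : (ℝ→ℝ→ℝ) × (ℝ→ℝ→ℝ)).2 ∈ tensorSpan lamp := fun φ => φ.2
  have hJmem : ∀ φ, J φ ∈ Sp := by
    intro φ
    have h2 : (fun x => (φ : (ℝ→ℝ→ℝ) × (ℝ→ℝ→ℝ)).2 x 0) ∈ Sp :=
      aux_trace_mem lamp (hmemD φ).2
    have h1 : (fun x => (φ : (ℝ→ℝ→ℝ) × (ℝ→ℝ→ℝ)).1 x 0) ∈ Sm :=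
      aux_trace_mem lamm (hmemD φ).1
    have : J φ = (fun x => (φ : (ℝ→ℝ→ℝ) × (ℝ→ℝ→ℝ)).2 x 0)
        - (fun x => (φ : (ℝ→ℝ→ℝ) × (ℝ→ℝ→ℝ)).1 x 0) := rfl
    rw [this]
    exact sub_mem h2 (hnested h1)
  set JW : ↥D →ₗ[ℝ] ↥Sp := J.codRestrict Sp hJmem with hJWdef
  set d : ↥D →ₗ[ℝ] ↥Sp := JW - π ∘ₗ JW with hddef
  set Tg : (ℝ → ℝ) →ₗ[ℝ] (ℝ → ℝ → ℝ) :=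
    { toFun := fun v => fun x s => v x * g s
      map_add' := fun u v => by funext x s; simp [add_mul]
      map_smul' := fun a v => by funext x s; simp; ring } with hTgdef
  set corr : ↥D →ₗ[ℝ] (ℝ → ℝ → ℝ) := Tg ∘ₗ Sp.subtype ∘ₗ d with hcorrdef
  have hcorrapp : ∀ φ : ↥D, corr φ = fun x s => (d φ : ℝ → ℝ) x * g s := fun φ => rfl
  have hcorrmem : ∀ φ, corr φ ∈ tensorSpan lamp := fun φ => aux_tensor_mem lamp (d φ).2 hgSp
  set Q0 : ↥D →ₗ[ℝ] (ℝ→ℝ→ℝ) × (ℝ→ℝ→ℝ) :=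
    D.subtype - (LinearMap.inr ℝ (ℝ→ℝ→ℝ) (ℝ→ℝ→ℝ)) ∘ₗ corr with hQ0def
  have hQ0app : ∀ φ : ↥D, Q0 φ = ((φ : (ℝ→ℝ→ℝ) × (ℝ→ℝ→ℝ)).1,
      (φ : (ℝ→ℝ→ℝ) × (ℝ→ℝ→ℝ)).2 - corr φ) := by
    intro φ
    show (φ : (ℝ→ℝ→ℝ) × (ℝ→ℝ→ℝ)) - ((0 : ℝ→ℝ→ℝ), corr φ) = _
    ext1 <;> simp
  have hQ0mem : ∀ φ, Q0 φ ∈ D := by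
    intro φ
    rw [hQ0app φ]
    refine Submodule.mem_prod.mpr ⟨(hmemD φ).1, sub_mem (hmemD φ).2 (hcorrmem φ)⟩
  set P : ↥D →ₗ[ℝ] ↥D := Q0.codRestrict D hQ0mem with hPdef
  have hPapp : ∀ φ : ↥D, (P φ : (ℝ→ℝ→ℝ) × (ℝ→ℝ→ℝ)) = ((φ : (ℝ→ℝ→ℝ) × (ℝ→ℝ→ℝ)).1,
      (φ : (ℝ→ℝ→ℝ) × (ℝ→ℝ→ℝ)).2 - corr φ) := by
    intro φ; rw [← hQ0app φ]; rfl
  -- value of d on [0,1]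
  have hdval : ∀ φ : ↥D, ∀ x ∈ Set.Icc (0:ℝ) 1,
      (d φ : ℝ → ℝ) x = (φ : (ℝ→ℝ→ℝ) × (ℝ→ℝ→ℝ)).2 x 0
        - (φ : (ℝ→ℝ→ℝ) × (ℝ→ℝ→ℝ)).1 x 0 := by
    intro φ x hx
    have h1 : (d φ : ℝ → ℝ) x = J φ x - (π (JW φ) : ℝ → ℝ) x := rfl
    have h2 : (π (JW φ) : ℝ → ℝ) x = 0 := ((hKmem _).mp (hπmem (JW φ))) x hx
    rw [h1, h2, hJapp φ x]; ring
  -- Part 1: P φ is edge continuous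
  have part1 : ∀ φ, EdgeCont ((P φ : (ℝ→ℝ→ℝ) × (ℝ→ℝ→ℝ))) := by
    intro φ x hx
    rw [hPapp φ]
    show (φ : (ℝ→ℝ→ℝ) × (ℝ→ℝ→ℝ)).1 x 0
        = (φ : (ℝ→ℝ→ℝ) × (ℝ→ℝ→ℝ)).2 x 0 - corr φ x 0
    rw [hcorrapp φ]
    simp only []
    rw [hg0, hdval φ x hx]; ring
  -- Part 2: P φ = φ ↔ EdgeCont φ
  have hd0 : ∀ φ : ↥D, d φ = 0 ↔ EdgeCont ((φ : (ℝ→ℝ→ℝ) × (ℝ→ℝ→ℝ))) := by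
    intro φ
    constructor
    · intro h x hx
      have := hdval φ x hx
      rw [h] at this
      simp only [ZeroMemClass.coe_zero, Pi.zero_apply] at this
      linarith
    · intro h
      have hK : JW φ ∈ K := by
        rw [hKmem]
        intro x hx
        show J φ x = 0
        rw [hJapp φ x, h x hx]; ring
      have : π (JW φ) = JW φ := hπid _ hK
      show JW φ - π (JW φ) = 0
      rw [this, sub_self]
  have hcorr0 : ∀ φ : ↥D, corr φ = 0 ↔ d φ = 0 := by
    intro φ
    constructor
    · intro h
      have hfun : ∀ x : ℝ, (d φ : ℝ → ℝ) x = 0 := by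
        intro x
        have := congrFun (congrFun h x) 0
        rw [hcorrapp φ] at this
        simpa [hg0] using this
      apply Subtype.ext
      funext x
      exact hfun x
    · intro h
      rw [hcorrapp φ, h]
      funext x s
      simp
  have part2 : ∀ φ : ↥D, P φ = φ ↔ EdgeCont ((φ : (ℝ→ℝ→ℝ) × (ℝ→ℝ→ℝ))) := by
    intro φ
    rw [← hd0 φ, ← hcorr0 φ]
    constructor
    · intro h
      have := congrArg (fun ψ : ↥D => (ψ : (ℝ→ℝ→ℝ) × (ℝ→ℝ→ℝ)).2) h
      simp only [hPapp φ] at this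
      have h2 : (φ : (ℝ→ℝ→ℝ) × (ℝ→ℝ→ℝ)).2 - corr φ = (φ : (ℝ→ℝ→ℝ) × (ℝ→ℝ→ℝ)).2 := this
      have := sub_eq_self.mp h2
      exact this
    · intro h
      apply Subtype.ext
      rw [hPapp φ, h, sub_zero]
  -- Part 3: idempotence
  have part3 : P ∘ₗ P = P := by
    apply LinearMap.ext
    intro φ
    exact (part2 (P φ)).mpr (part1 φ)
  -- Part 4: moment preservation
  have part4 : ∀ φ : ↥D, ∀ q₁ ∈ polyDegLT r, ∀ q₂ ∈ polyDegLT r,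
      mom2 ((P φ : (ℝ→ℝ→ℝ) × (ℝ→ℝ→ℝ)).1) q₁ q₂ =
        mom2 ((φ : (ℝ→ℝ→ℝ) × (ℝ→ℝ→ℝ)).1) q₁ q₂ ∧
      mom2 ((P φ : (ℝ→ℝ→ℝ) × (ℝ→ℝ→ℝ)).2) q₁ q₂ =
        mom2 ((φ : (ℝ→ℝ→ℝ) × (ℝ→ℝ→ℝ)).2) q₁ q₂ := by
    intro φ q₁ hq₁ q₂ hq₂
    have hq₁c := aux_poly_cont hq₁
    have hq₂c := aux_poly_cont hq₂
    constructor
    · rw [hPapp φ]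
    · rw [hPapp φ]
      unfold mom2
      apply intervalIntegral.integral_congr
      intro x _
      simp only []
      have e1 : (fun s => ((φ : (ℝ→ℝ→ℝ) × (ℝ→ℝ→ℝ)).2 - corr φ) x s * q₁ x * q₂ s)
          = fun s => ((φ : (ℝ→ℝ→ℝ) × (ℝ→ℝ→ℝ)).2 x s * q₁ x * q₂ s)
            - ((d φ : ℝ → ℝ) x * q₁ x) * (g s * q₂ s) := by
        funext s
        rw [hcorrapp φ]
        show ((φ : (ℝ→ℝ→ℝ) × (ℝ→ℝ→ℝ)).2 x s - (d φ : ℝ → ℝ) x * g s) * q₁ x * q₂ s = _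
        ring
      have hIa : IntervalIntegrable
          (fun s => (φ : (ℝ→ℝ→ℝ) × (ℝ→ℝ→ℝ)).2 x s * q₁ x * q₂ s)
          MeasureTheory.volume 0 1 := by
        apply hII
        exact ((aux_tensor_contOn_s hc_p (hmemD φ).2 x).mul continuousOn_const).mul
          hq₂c.continuousOn
      have hIb : IntervalIntegrable
          (fun s => ((d φ : ℝ → ℝ) x * q₁ x) * (g s * q₂ s)) MeasureTheory.volume 0 1 := by
        apply hII
        exact continuousOn_const.mul (hgcont.mul hq₂c.continuousOn)
      rw [e1, intervalIntegral.integral_sub hIa hIb, intervalIntegral.integral_const_mul,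
        hgmom q₂ hq₂]
      ring
  exact ⟨P, part1, part2, part3, part4⟩


end
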